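/- If 𝒢 is a connected groupoid and z ∈ 𝒢₀, then the categories Set^𝒢 / 𝒢ᶜ and Set^{𝒢_z} / 𝒢_zᶜ are monoidally equivalent, where both slices carry the tensor product induced by the conjugation monoid structure. -/

import Mathlib

open CategoryTheory

universe v u

section GSets
variable {G : Type u} [Groupoid.{v} G]

/-- Pointwise product of `𝒢`-sets. -/
@[simps] def prodF (X Y : G ⥤ FintypeCat.{v}) : G ⥤ FintypeCat.{v} where
  obj g := FintypeCat.of (X.obj g × Y.obj g)
  map h := FintypeCat.homMk fun p => (X.map h p.1, Y.map h p.2)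
  map_id g := by ext p <;> (try simp) <;> rfl
  map_comp f h := by ext p <;> (try simp) <;> rfl

/-- Pointwise coproduct (disjoint union) of `𝒢`-sets. -/
@[simps] def coprodF (X Y : G ⥤ FintypeCat.{v}) : G ⥤ FintypeCat.{v} where
  obj g := FintypeCat.of (X.obj g ⊕ Y.obj g)
  map h := FintypeCat.homMk fun p => Sum.map (X.map h) (Y.map h) p
  map_id g := by ext p; cases p <;> (try simp) <;> rfl
  map_comp f h := by ext p; cases p <;> (try simp) <;> rfl

/-- The terminal `𝒢`-set. -/
def termF : G ⥤ FintypeCat.{v} := (Functor.const G).obj (FintypeCat.of PUnit)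

end GSets

section Tensor
variable {G : Type u} [Groupoid.{v} G]
variable (Sb : G ⥤ FintypeCat.{v}) [∀ g : G, Monoid (Sb.obj g)]

/-- The tensor product of two crossed `𝒢`-sets over the `𝒢`-monoid with underlying
`𝒢`-set `Sb`: the underlying `𝒢`-set is the pointwise product, and the structure map
is `(x, y) ↦ θ(x) · τ(y)`. -/
def tensorOver
    (hmul : ∀ ⦃x y : G⦄ (h : x ⟶ y) (a b : Sb.obj x), Sb.map h (a * b) = Sb.map h a * Sb.map h b)
    (u v : Over Sb) : Over Sb :=
  Over.mk (Y := prodF u.left v.left)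
    { app := fun g => FintypeCat.homMk fun p =>
        (show Sb.obj g from u.hom.app g p.1) * (show Sb.obj g from v.hom.app g p.2)
      naturality := by
        intro x y f
        ext p
        have hu : (show Sb.obj y from u.hom.app y (u.left.map f p.1)) =
            Sb.map f (show Sb.obj x from u.hom.app x p.1) :=
          ConcreteCategory.congr_hom (u.hom.naturality f) p.1
        have hv : (show Sb.obj y from v.hom.app y (v.left.map f p.2)) =
            Sb.map f (show Sb.obj x from v.hom.app x p.2) :=
          ConcreteCategory.congr_hom (v.hom.naturality f) p.2
        exact (congrArg₂ (· * ·) hu hv).trans (hmul f _ _).symm }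

/-- The unit object: the terminal `𝒢`-set mapping to the identity elements of the
`𝒢`-monoid. -/
def unitOver
    (hone : ∀ ⦃x y : G⦄ (h : x ⟶ y), Sb.map h (1 : Sb.obj x) = 1) : Over Sb :=
  Over.mk (Y := termF)
    { app := fun g => FintypeCat.homMk fun _ => (1 : Sb.obj g)
      naturality := by
        intro x y f
        ext p
        exact (hone f).symm }

/-- Coproducts in the category of crossed `𝒢`-sets. -/
def coprodOver (u v : Over Sb) : Over Sb :=
  Over.mk (Y := coprodF u.left v.left)
    { app := fun g => FintypeCat.homMk fun p => Sum.elim (u.hom.app g) (v.hom.app g) p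
      naturality := by intro x y f; ext p; cases p with
        | inl a => exact ConcreteCategory.congr_hom (u.hom.naturality f) a
        | inr b => exact ConcreteCategory.congr_hom (v.hom.naturality f) b }

end Tensor

section Conj
variable (G : Type u) [Groupoid.{v} G] [∀ x y : G, Fintype (x ⟶ y)]

/-- The underlying `𝒢`-set of the conjugation action `𝒢ᶜ : 𝒢 ⥤ Mon`, sending an
object to its isotropy group and a morphism `g` to conjugation by `g`. -/
@[simps] def GcBar : G ⥤ FintypeCat.{v} where
  obj x := FintypeCat.of (x ⟶ x)
  map g := FintypeCat.homMk fun n => Groupoid.inv g ≫ n ≫ g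
  map_id x := by ext n; (try simp) <;> rfl
  map_comp f h := by
    ext n
    show Groupoid.inv (f ≫ h) ≫ n ≫ f ≫ h = Groupoid.inv h ≫ (Groupoid.inv f ≫ n ≫ f) ≫ h
    simp [Groupoid.inv_eq_inv]

/-- The monoid structure on the isotropy group `𝒢ₓ`, with multiplication written in
function-composition order as in the paper (`(g·h) = g ∘ h`). -/
instance (x : G) : Monoid ((GcBar G).obj x) := inferInstanceAs (Monoid (End x))

lemma GcBar_map_mul : ∀ ⦃x y : G⦄ (h : x ⟶ y) (a b : (GcBar G).obj x),
    (GcBar G).map h (a * b) = (GcBar G).map h a * (GcBar G).map h b := by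
  intro x y h a b
  change x ⟶ x at a b
  show Groupoid.inv h ≫ (b ≫ a) ≫ h = (Groupoid.inv h ≫ b ≫ h) ≫ Groupoid.inv h ≫ a ≫ h
  simp

lemma GcBar_map_one : ∀ ⦃x y : G⦄ (h : x ⟶ y),
    (GcBar G).map h (1 : (GcBar G).obj x) = 1 := by
  intro x y h
  show Groupoid.inv h ≫ 𝟙 x ≫ h = 𝟙 y
  simp

end Conj

instance singleObjFintypeHom (M : Type v) [Monoid M] [Fintype M] (a b : SingleObj M) :
    Fintype (a ⟶ b) :=
  inferInstanceAs (Fintype M)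

section TensorAux
variable {G : Type u} [Groupoid.{v} G]
variable (Sb : G ⥤ FintypeCat.{v}) [∀ g : G, Monoid (Sb.obj g)]
variable (hmul : ∀ ⦃x y : G⦄ (h : x ⟶ y) (a b : Sb.obj x), Sb.map h (a * b) = Sb.map h a * Sb.map h b)
variable (hone : ∀ ⦃x y : G⦄ (h : x ⟶ y), Sb.map h (1 : Sb.obj x) = 1)

lemma overHomExt {u v : Over Sb} {f g : u ⟶ v}
    (h : ∀ (x : G) (p : u.left.obj x), f.left.app x p = g.left.app x p) : f = g :=
  Over.OverMorphism.ext (NatTrans.ext (funext fun x => FintypeCat.hom_ext _ _ (h x)))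

def tensorHomOver {u u' v v' : Over Sb} (f : u ⟶ u') (g : v ⟶ v') :
    tensorOver Sb hmul u v ⟶ tensorOver Sb hmul u' v' :=
  Over.homMk
    { app := fun x => FintypeCat.homMk fun p => (f.left.app x p.1, g.left.app x p.2)
      naturality := fun x y h => by
        refine FintypeCat.hom_ext _ _ fun p => ?_
        exact Prod.ext (ConcreteCategory.congr_hom (f.left.naturality h) p.1) (ConcreteCategory.congr_hom (g.left.naturality h) p.2) }
    (by
      ext x p
      change _ × _ at p
      show (show Sb.obj x from u'.hom.app x (f.left.app x p.1)) *
          (show Sb.obj x from v'.hom.app x (g.left.app x p.2)) =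
        (show Sb.obj x from u.hom.app x p.1) * (show Sb.obj x from v.hom.app x p.2)
      exact congrArg₂ (fun a b : Sb.obj x => a * b)
        (ConcreteCategory.congr_hom (NatTrans.congr_app (Over.w f) x) p.1)
        (ConcreteCategory.congr_hom (NatTrans.congr_app (Over.w g) x) p.2))

def assocOver (u v w : Over Sb) :
    tensorOver Sb hmul (tensorOver Sb hmul u v) w ≅ tensorOver Sb hmul u (tensorOver Sb hmul v w) :=
  Over.isoMk
    (NatIso.ofComponents
      (fun x => FintypeCat.equivEquivIso (Equiv.prodAssoc _ _ _))
      (fun h => by exact FintypeCat.hom_ext _ _ fun p => rfl))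
    (by
      ext x p
      change (_ × _) × _ at p
      show (show Sb.obj x from u.hom.app x p.1.1) *
          ((show Sb.obj x from v.hom.app x p.1.2) * (show Sb.obj x from w.hom.app x p.2)) =
        ((show Sb.obj x from u.hom.app x p.1.1) * (show Sb.obj x from v.hom.app x p.1.2)) *
          (show Sb.obj x from w.hom.app x p.2)
      exact (mul_assoc _ _ _).symm)

def lunitOver (u : Over Sb) : tensorOver Sb hmul (unitOver Sb hone) u ≅ u :=
  Over.isoMk
    (NatIso.ofComponents
      (fun x => FintypeCat.equivEquivIso (Equiv.punitProd _))
      (fun h => by exact FintypeCat.hom_ext _ _ fun p => rfl))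
    (by
      ext x p
      change _ × _ at p
      show (show Sb.obj x from u.hom.app x p.2) =
        1 * (show Sb.obj x from u.hom.app x p.2)
      exact (one_mul _).symm)

def runitOver (u : Over Sb) : tensorOver Sb hmul u (unitOver Sb hone) ≅ u :=
  Over.isoMk
    (NatIso.ofComponents
      (fun x => FintypeCat.equivEquivIso (Equiv.prodPUnit _))
      (fun h => by exact FintypeCat.hom_ext _ _ fun p => rfl))
    (by
      ext x p
      change _ × _ at p
      show (show Sb.obj x from u.hom.app x p.1) =
        (show Sb.obj x from u.hom.app x p.1) * 1
      exact (mul_one _).symm)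

def overMonoidalStruct : MonoidalCategoryStruct (Over Sb) where
  tensorObj := tensorOver Sb hmul
  whiskerLeft u _ _ g := tensorHomOver Sb hmul (𝟙 u) g
  whiskerRight f w := tensorHomOver Sb hmul f (𝟙 w)
  tensorHom := tensorHomOver Sb hmul
  tensorUnit := unitOver Sb hone
  associator := assocOver Sb hmul
  leftUnitor := lunitOver Sb hmul hone
  rightUnitor := runitOver Sb hmul hone

def overMonoidal : MonoidalCategory (Over Sb) :=
  letI := overMonoidalStruct Sb hmul hone
  MonoidalCategory.ofTensorHom
    (id_tensorHom_id := fun u v => overHomExt Sb (fun x p => rfl))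
    (id_tensorHom := fun u {_ _} f => rfl)
    (tensorHom_id := fun {_ _} f w => rfl)
    (tensorHom_comp_tensorHom := fun f₁ f₂ g₁ g₂ => overHomExt Sb (fun x p => rfl))
    (associator_naturality := fun f₁ f₂ f₃ => overHomExt Sb (fun x p => rfl))
    (leftUnitor_naturality := fun f => overHomExt Sb (fun x p => rfl))
    (rightUnitor_naturality := fun f => overHomExt Sb (fun x p => rfl))
    (pentagon := fun u v w x => overHomExt Sb (fun x p => rfl))
    (triangle := fun u v => overHomExt Sb (fun x p => rfl))
end TensorAux


section Incl
variable {G : Type u} [Groupoid.{v} G] [∀ x y : G, Fintype (x ⟶ y)] (z : G)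

/-- Inversion as a monoid hom from the vertex group to the endomorphism monoid. -/
def inclHom : (z ⟶ z) →* End z where
  toFun n := Groupoid.inv n
  map_one' := by
    show Groupoid.inv (𝟙 z) = 𝟙 z
    simp [Groupoid.inv_eq_inv]
  map_mul' m n := by
    show Groupoid.inv (m ≫ n) = Groupoid.inv n ≫ Groupoid.inv m
    simp [Groupoid.inv_eq_inv]

/-- The inclusion of the isotropy groupoid at `z` into `G`. -/
def inclZ : SingleObj (z ⟶ z) ⥤ G := SingleObj.functor (inclHom z)

lemma inclZ_map {a b : SingleObj (z ⟶ z)} (f : a ⟶ b) : (inclZ z).map f = Groupoid.inv f := rfl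

lemma ginv_ginv {a b : G} (f : a ⟶ b) : Groupoid.inv (Groupoid.inv f) = f := by
  simp [Groupoid.inv_eq_inv]

instance : (inclZ z).Faithful where
  map_injective {a b} f g h := by
    have h2 : Groupoid.inv (Groupoid.inv (show z ⟶ z from f)) =
        Groupoid.inv (Groupoid.inv (show z ⟶ z from g)) := congrArg Groupoid.inv h
    rwa [ginv_ginv, ginv_ginv] at h2

instance : (inclZ z).Full where
  map_surjective {a b} f :=
    ⟨Groupoid.inv f, by
      show Groupoid.inv (Groupoid.inv f) = f
      exact ginv_ginv f⟩

def inclZEssSurj (hconn : ∀ a b : G, Nonempty (a ⟶ b)) : (inclZ z).EssSurj where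
  mem_essImage a :=
    ⟨SingleObj.star _, ⟨(Groupoid.isoEquivHom z a).symm (hconn z a).some⟩⟩

/-- The comparison iso between the restricted conjugation action and the conjugation
action of the isotropy group, given by inversion. -/
def conjIso : inclZ z ⋙ GcBar G ≅ GcBar (SingleObj (z ⟶ z)) :=
  NatIso.ofComponents
    (fun x => FintypeCat.equivEquivIso
      (show (z ⟶ z) ≃ (z ⟶ z) from ⟨fun n => Groupoid.inv n, fun n => Groupoid.inv n,
        fun n => by simp [Groupoid.inv_eq_inv], fun n => by simp [Groupoid.inv_eq_inv]⟩))
    (fun {x y} h => by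
      refine FintypeCat.hom_ext _ _ fun n => ?_
      show (Groupoid.inv (Groupoid.inv (Groupoid.inv (show z ⟶ z from h)) ≫ n ≫
          Groupoid.inv (show z ⟶ z from h)) : z ⟶ z) =
        ((show z ⟶ z from h) ≫ Groupoid.inv n) ≫ Groupoid.inv (show z ⟶ z from h)
      exact (fun (h n : z ⟶ z) => by simp [Groupoid.inv_eq_inv] : ∀ h n : z ⟶ z,
        Groupoid.inv (Groupoid.inv (Groupoid.inv h) ≫ n ≫ Groupoid.inv h) =
          (h ≫ Groupoid.inv n) ≫ Groupoid.inv h) _ _)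

lemma conjIso_hom_app_apply (x : SingleObj (z ⟶ z)) (n : z ⟶ z) :
    (conjIso z).hom.app x n = Groupoid.inv n := rfl
end Incl


open MonoidalCategory

section Main
variable {G : Type u} [Groupoid.{v} G] [∀ x y : G, Fintype (x ⟶ y)] (z : G)

instance overGcBarMonoidal : MonoidalCategory (Over (GcBar G)) :=
  overMonoidal (GcBar G) (GcBar_map_mul G) (GcBar_map_one G)

/-- The restriction functor on slices over the conjugation actions. -/
def restrictF : Over (GcBar G) ⥤ Over (GcBar (SingleObj (z ⟶ z))) :=
  Over.post ((Functor.whiskeringLeft _ _ FintypeCat.{v}).obj (inclZ z)) ⋙ Over.map (conjIso z).hom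

lemma restrictF_isEquiv (hconn : ∀ a b : G, Nonempty (a ⟶ b)) :
    (restrictF z).IsEquivalence := by
  haveI : (inclZ z).EssSurj := inclZEssSurj z hconn
  haveI : (inclZ z).IsEquivalence := {}
  haveI : (Over.map (conjIso z).hom).IsEquivalence := by
    rw [← Over.mapIso_functor]; infer_instance
  have : (Over.post ((Functor.whiskeringLeft _ _ FintypeCat.{v}).obj (inclZ z)) ⋙
      Over.map (conjIso z).hom).IsEquivalence := inferInstance
  exact this

/-- The unit comparison isomorphism. -/
def epsF : 𝟙_ (Over (GcBar (SingleObj (z ⟶ z)))) ≅ (restrictF z).obj (𝟙_ (Over (GcBar G))) :=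
  Over.isoMk
    (NatIso.ofComponents (fun x => Iso.refl _) (fun {x y} h => by exact FintypeCat.hom_ext _ _ fun p => rfl))
    (by
      ext x p
      show (Groupoid.inv (𝟙 z) : z ⟶ z) = 𝟙 z
      simp [Groupoid.inv_eq_inv])

/-- The tensorator comparison isomorphism. -/
def muF (u v : Over (GcBar G)) :
    (restrictF z).obj u ⊗ (restrictF z).obj v ≅ (restrictF z).obj (u ⊗ v) :=
  Over.isoMk
    (NatIso.ofComponents (fun x => Iso.refl _) (fun {x y} h => by exact FintypeCat.hom_ext _ _ fun p => rfl))
    (by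
      ext x p
      change _ × _ at p
      show (Groupoid.inv ((show z ⟶ z from v.hom.app z p.2) ≫
          (show z ⟶ z from u.hom.app z p.1)) : z ⟶ z) =
        Groupoid.inv (show z ⟶ z from u.hom.app z p.1) ≫
          Groupoid.inv (show z ⟶ z from v.hom.app z p.2)
      exact (fun (a b : z ⟶ z) => by simp [Groupoid.inv_eq_inv] : ∀ a b : z ⟶ z,
        Groupoid.inv (b ≫ a) = Groupoid.inv a ≫ Groupoid.inv b) _ _)

def coreMonoidalF : (restrictF z).CoreMonoidal where
  εIso := epsF z
  μIso := muF z
  μIso_hom_natural_left f X' := overHomExt _ (fun x p => rfl)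
  μIso_hom_natural_right X' f := overHomExt _ (fun x p => rfl)
  associativity X Y Z := overHomExt _ (fun x p => rfl)
  left_unitality X := overHomExt _ (fun x p => rfl)
  right_unitality X := overHomExt _ (fun x p => rfl)
end Main

/-- If `𝒢` is a connected groupoid and `z ∈ 𝒢₀`, then the categories
`Set^𝒢 / 𝒢ᶜ` and `Set^{𝒢_z} / 𝒢_zᶜ` of crossed `𝒢`-sets (resp. crossed `𝒢_z`-sets)
are monoidally equivalent, both slices being equipped with the tensor product induced
by the conjugation monoid structure. -/
theorem slice_over_conjugation_monoidally_equivalent (G : Type u) [Groupoid.{v} G]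
    [∀ x y : G, Fintype (x ⟶ y)] (hconn : ∀ a b : G, Nonempty (a ⟶ b)) (z : G) :
    ∃ (M₁ : MonoidalCategory (Over (GcBar G)))
      (M₂ : MonoidalCategory (Over (GcBar (SingleObj (z ⟶ z))))),
      (∀ u v : Over (GcBar G),
        M₁.toMonoidalCategoryStruct.tensorObj u v =
          tensorOver (GcBar G) (GcBar_map_mul G) u v) ∧
      (M₁.toMonoidalCategoryStruct.tensorUnit = unitOver (GcBar G) (GcBar_map_one G)) ∧
      (∀ u v : Over (GcBar (SingleObj (z ⟶ z))),
        M₂.toMonoidalCategoryStruct.tensorObj u v =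
          tensorOver (GcBar (SingleObj (z ⟶ z)))
            (GcBar_map_mul (SingleObj (z ⟶ z))) u v) ∧
      (M₂.toMonoidalCategoryStruct.tensorUnit =
        unitOver (GcBar (SingleObj (z ⟶ z))) (GcBar_map_one (SingleObj (z ⟶ z)))) ∧
      ∃ (F : Over (GcBar G) ⥤ Over (GcBar (SingleObj (z ⟶ z))))
        (_ : @Functor.Monoidal _ _ M₁ _ _ M₂ F),
        F.IsEquivalence :=
  ⟨overGcBarMonoidal, overGcBarMonoidal, fun u v => rfl, rfl, fun u v => rfl, rfl,
    restrictF z, (coreMonoidalF z).toMonoidal, restrictF_isEquiv z hconn⟩
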